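/- Let Δ > 0 and fix a real r with 0 ≤ r < Δ. Then the error ratio Q⁺(i, r) is monotonically nonincreasing as a function of i on the set of reals i ≤ 0: for all i₁ ≤ i₂ ≤ 0, Q⁺(i₂, r) ≤ Q⁺(i₁, r). -/

import Mathlib

/-- Φ⁺(x) = log₂(1 + 2^x) -/
noncomputable def Phip (x : ℝ) : ℝ := Real.logb 2 (1 + (2:ℝ) ^ x)

/-- (Φ⁺)'(x) = 2^x / (2^x + 1) -/
noncomputable def dPhip (x : ℝ) : ℝ := (2:ℝ) ^ x / ((2:ℝ) ^ x + 1)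

/-- First-order Taylor remainder E⁺(i, r) -/
noncomputable def Ep (i r : ℝ) : ℝ := Phip (i - r) - Phip i + r * dPhip i

/-- Error ratio Q⁺(i, r) = E⁺(i, r)/E⁺(i, Δ) -/
noncomputable def Qp (Δ i r : ℝ) : ℝ := Ep i r / Ep i Δ

lemma two_rpow_pos (x : ℝ) : 0 < (2:ℝ) ^ x := Real.rpow_pos_of_pos two_pos x

lemma hasDerivAt_two_rpow (x : ℝ) :
    HasDerivAt (fun x : ℝ => (2:ℝ) ^ x) ((2:ℝ) ^ x * Real.log 2) x :=
  (Real.hasStrictDerivAt_const_rpow two_pos x).hasDerivAt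

lemma hasDerivAt_Phip (x : ℝ) : HasDerivAt Phip (dPhip x) x := by
  have h1 : (0:ℝ) < 1 + (2:ℝ) ^ x := by positivity
  have h2 : HasDerivAt (fun x : ℝ => 1 + (2:ℝ) ^ x) ((2:ℝ) ^ x * Real.log 2) x :=
    (hasDerivAt_two_rpow x).const_add 1
  have h3 := ((Real.hasDerivAt_log h1.ne').comp x h2).div_const (Real.log 2)
  have hfun : Phip = fun x : ℝ => Real.log (1 + (2:ℝ) ^ x) / Real.log 2 := by
    funext y; simp [Phip, Real.logb]
  rw [hfun]
  convert h3 using 1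
  rfl
  rfl
  rfl
  have hl2 : Real.log 2 ≠ 0 := (Real.log_pos one_lt_two).ne'
  have hx := (two_rpow_pos x).ne'
  unfold dPhip
  field_simp
  ring

lemma dPhip_lt {x y : ℝ} (h : x < y) : dPhip x < dPhip y := by
  have ha := two_rpow_pos x
  have hb := two_rpow_pos y
  have hab : (2:ℝ) ^ x < (2:ℝ) ^ y :=
    Real.rpow_lt_rpow_left_iff one_lt_two |>.mpr h
  unfold dPhip
  rw [div_lt_div_iff₀ (by linarith) (by linarith)]
  nlinarith

lemma dPhip_le {x y : ℝ} (h : x ≤ y) : dPhip x ≤ dPhip y := by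
  rcases eq_or_lt_of_le h with rfl | h
  · exact le_refl _
  · exact (dPhip_lt h).le

lemma hasDerivAt_Ep (i ρ : ℝ) :
    HasDerivAt (fun t => Ep i t) (dPhip i - dPhip (i - ρ)) ρ := by
  have h1 : HasDerivAt (fun t : ℝ => i - t) (-1) ρ := (hasDerivAt_id ρ).const_sub i
  have h2 := (hasDerivAt_Phip (i - ρ)).comp ρ h1
  have h3 : HasDerivAt (fun t : ℝ => t * dPhip i) (dPhip i) ρ := by
    simpa using (hasDerivAt_id ρ).mul_const (dPhip i)
  have h4 := (h2.sub_const (Phip i)).add h3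
  have hfun : (fun t => Ep i t) = fun t => (Phip (i - t) - Phip i) + t * dPhip i := rfl
  rw [hfun]
  convert h4 using 1
  rfl
  rfl
  rfl
  ring

lemma Ep_zero (i : ℝ) : Ep i 0 = 0 := by simp [Ep]

lemma Ep_pos (i : ℝ) {ρ : ℝ} (hρ : 0 < ρ) : 0 < Ep i ρ := by
  have mono : StrictMonoOn (fun t => Ep i t) (Set.Ici 0) := by
    apply strictMonoOn_of_deriv_pos (convex_Ici 0)
    · exact fun t _ => (hasDerivAt_Ep i t).differentiableAt.continuousAt.continuousWithinAt
    · intro t ht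
      rw [interior_Ici] at ht
      rw [(hasDerivAt_Ep i t).deriv]
      have : i - t < i := by simp only [Set.mem_Ioi] at ht; linarith
      linarith [dPhip_lt this]
  have := mono (Set.self_mem_Ici) (Set.mem_Ici.mpr hρ.le) hρ
  simpa [Ep_zero] using this

lemma Ep_nonneg (i : ℝ) {ρ : ℝ} (hρ : 0 ≤ ρ) : 0 ≤ Ep i ρ := by
  rcases eq_or_lt_of_le hρ with rfl | h
  · simp [Ep_zero]
  · exact (Ep_pos i h).le

lemma key (i' i : ℝ) (h : i' ≤ i) {r Δ : ℝ} (hr : 0 < r) (hrΔ : r < Δ) :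
    Ep i r * Ep i' Δ ≤ Ep i Δ * Ep i' r := by
  set u' := (2:ℝ) ^ i' with hu'def
  set u := (2:ℝ) ^ i with hudef
  have hu' : 0 < u' := two_rpow_pos i'
  have hu : 0 < u := two_rpow_pos i
  have huu : u' ≤ u := Real.rpow_le_rpow_left_iff one_lt_two |>.mpr h
  set H : ℝ → ℝ := fun ρ =>
    (u * (1 + u') * (1 + u' * (2:ℝ) ^ (-ρ))) / (u' * (1 + u) * (1 + u * (2:ℝ) ^ (-ρ))) with hHdef
  have key_id : ∀ ρ : ℝ, dPhip i - dPhip (i - ρ) = H ρ * (dPhip i' - dPhip (i' - ρ)) := by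
    intro ρ
    have ha : (0:ℝ) < (2:ℝ) ^ (-ρ) := two_rpow_pos _
    have e1 : (2:ℝ) ^ (i - ρ) = u * (2:ℝ) ^ (-ρ) := by
      rw [sub_eq_add_neg, Real.rpow_add two_pos]
    have e2 : (2:ℝ) ^ (i' - ρ) = u' * (2:ℝ) ^ (-ρ) := by
      rw [sub_eq_add_neg, Real.rpow_add two_pos]
    set a := (2:ℝ) ^ (-ρ)
    simp only [hHdef, dPhip, e1, e2, ← hudef, ← hu'def]
    have h1 : u + 1 ≠ 0 := by positivity
    have h2 : u' + 1 ≠ 0 := by positivity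
    have h3 : u * a + 1 ≠ 0 := by positivity
    have h4 : u' * a + 1 ≠ 0 := by positivity
    have h5 : u' * (1 + u) * (1 + u * a) ≠ 0 := by positivity
    field_simp
    ring
  set H' : ℝ → ℝ := fun ρ =>
    (u * u' * (1 + u') * (1 + u)) * ((Real.log 2 * (2:ℝ) ^ (-ρ)) * (u - u')) /
      (u' * (1 + u) * (1 + u * (2:ℝ) ^ (-ρ))) ^ 2 with hH'def
  have ha_deriv : ∀ ρ : ℝ,
      HasDerivAt (fun ρ : ℝ => (2:ℝ) ^ (-ρ)) (-(Real.log 2 * (2:ℝ) ^ (-ρ))) ρ := by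
    intro ρ
    have := (hasDerivAt_two_rpow (-ρ)).comp ρ (hasDerivAt_id ρ).neg
    convert this using 1
    rfl
    rfl
    rfl
    ring
  have hasDerivAt_H : ∀ ρ : ℝ, HasDerivAt H (H' ρ) ρ := by
    intro ρ
    have ha : (0:ℝ) < (2:ℝ) ^ (-ρ) := two_rpow_pos _
    have hnum : HasDerivAt (fun ρ : ℝ => u * (1 + u') * (1 + u' * (2:ℝ) ^ (-ρ)))
        (u * (1 + u') * (u' * -(Real.log 2 * (2:ℝ) ^ (-ρ)))) ρ :=
      (((ha_deriv ρ).const_mul u').const_add 1).const_mul _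
    have hden : HasDerivAt (fun ρ : ℝ => u' * (1 + u) * (1 + u * (2:ℝ) ^ (-ρ)))
        (u' * (1 + u) * (u * -(Real.log 2 * (2:ℝ) ^ (-ρ)))) ρ :=
      (((ha_deriv ρ).const_mul u).const_add 1).const_mul _
    have hdne : u' * (1 + u) * (1 + u * (2:ℝ) ^ (-ρ)) ≠ 0 := by positivity
    have := hnum.div hden hdne
    convert this using 1
    rfl
    rfl
    rfl
    simp only [hH'def]
    set a := (2:ℝ) ^ (-ρ)
    field_simp
    ring
  have H'_nonneg : ∀ ρ : ℝ, 0 ≤ H' ρ := by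
    intro ρ
    have ha : (0:ℝ) < (2:ℝ) ^ (-ρ) := two_rpow_pos _
    have hl2 : (0:ℝ) < Real.log 2 := Real.log_pos one_lt_two
    apply div_nonneg
    · have : 0 ≤ u - u' := by linarith
      positivity
    · positivity
  set G : ℝ → ℝ := fun ρ => H ρ * Ep i' ρ - Ep i ρ with hGdef
  have hasDerivAt_G : ∀ ρ : ℝ, HasDerivAt G (H' ρ * Ep i' ρ) ρ := by
    intro ρ
    have := ((hasDerivAt_H ρ).mul (hasDerivAt_Ep i' ρ)).sub (hasDerivAt_Ep i ρ)
    convert this using 1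
    rfl
    rfl
    rfl
    rw [key_id ρ]
    ring
  have G_nonneg : ∀ ρ : ℝ, 0 ≤ ρ → 0 ≤ G ρ := by
    intro ρ hρ
    have mono : MonotoneOn G (Set.Ici 0) := by
      apply monotoneOn_of_deriv_nonneg (convex_Ici 0)
      · exact fun t _ => (hasDerivAt_G t).differentiableAt.continuousAt.continuousWithinAt
      · exact fun t _ => (hasDerivAt_G t).differentiableAt.differentiableWithinAt
      · intro t ht
        rw [interior_Ici] at ht
        rw [(hasDerivAt_G t).deriv]
        exact mul_nonneg (H'_nonneg t) (Ep_nonneg i' (Set.mem_Ioi.mp ht).le)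
    have h0 : G 0 = 0 := by simp [hGdef, Ep_zero]
    have := mono Set.self_mem_Ici (Set.mem_Ici.mpr hρ) hρ
    rwa [h0] at this
  -- ratio monotonicity
  set R : ℝ → ℝ := fun ρ => Ep i ρ / Ep i' ρ with hRdef
  have Rmono : MonotoneOn R (Set.Ioi 0) := by
    apply monotoneOn_of_deriv_nonneg (convex_Ioi 0)
    · intro t ht
      exact (((hasDerivAt_Ep i t).div (hasDerivAt_Ep i' t)
        (Ep_pos i' (Set.mem_Ioi.mp ht)).ne')).differentiableAt.continuousAt.continuousWithinAt
    · intro t ht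
      rw [interior_Ioi] at ht
      exact (((hasDerivAt_Ep i t).div (hasDerivAt_Ep i' t)
        (Ep_pos i' (Set.mem_Ioi.mp ht)).ne')).differentiableAt.differentiableWithinAt
    · intro t ht
      rw [interior_Ioi] at ht
      have htpos := Set.mem_Ioi.mp ht
      have hE2 := Ep_pos i' htpos
      rw [(show HasDerivAt R _ t from (hasDerivAt_Ep i t).div (hasDerivAt_Ep i' t) hE2.ne').deriv]
      apply div_nonneg _ (sq_nonneg _)
      have hnum : (dPhip i - dPhip (i - t)) * Ep i' t - Ep i t * (dPhip i' - dPhip (i' - t))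
          = (dPhip i' - dPhip (i' - t)) * G t := by
        rw [key_id t]; simp only [hGdef]; ring
      rw [hnum]
      apply mul_nonneg _ (G_nonneg t htpos.le)
      have : i' - t ≤ i' := by linarith
      linarith [dPhip_le this]
  have hΔ : (0:ℝ) < Δ := lt_trans hr hrΔ
  have := Rmono (Set.mem_Ioi.mpr hr) (Set.mem_Ioi.mpr hΔ) hrΔ.le
  simp only [hRdef] at this
  rw [div_le_div_iff₀ (Ep_pos i' hr) (Ep_pos i' hΔ)] at this
  linarith

theorem stmt_6 (Δ : ℝ) (hΔ : 0 < Δ) (r : ℝ) (hr0 : 0 ≤ r) (hrΔ : r < Δ) :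
    ∀ i₁ i₂ : ℝ, i₁ ≤ i₂ → i₂ ≤ 0 → Qp Δ i₂ r ≤ Qp Δ i₁ r := by
  intro i₁ i₂ h12 _
  rcases eq_or_lt_of_le hr0 with rfl | hr
  · simp [Qp, Ep_zero]
  · unfold Qp
    rw [div_le_div_iff₀ (Ep_pos i₂ hΔ) (Ep_pos i₁ hΔ)]
    linarith [key i₁ i₂ h12 hr hrΔ]
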